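/- Let B be a k × n matrix over a field F of rank k, and let C be an (n−k) × n matrix over F of rank n−k whose vector matroid is the dual of the vector matroid of B. Let r* denote the rank function of the vector matroid of C. For an index coding side-information structure assigning to each column index v a subset S(v) ⊆ [n] \ {v}, the matrix B is a valid (scalar linear) index coding matrix — i.e., for every v, the column space restricted to [n] \ S(v) satisfies rank([n] \ S(v)) = 1 + rank([n] \ (S(v) ∪ {v})) in the matroid of B — if and only if r*(S(v) ∪ {v}) = r*(S(v)) for every v ∈ [n]. -/

import Mathlib

/-- The rank of a set `X` in a matroid `M`: the maximum cardinality of an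
independent subset of `X`. -/
noncomputable def Matroid.mrank {α : Type*} (M : Matroid α) (X : Set α) : ℕ :=
  sSup {n | ∃ I, M.Indep I ∧ I ⊆ X ∧ I.ncard = n}

lemma Matroid.IsBasis.mrank_eq {α : Type*} [Fintype α] {M : Matroid α} {I X : Set α}
    (hI : M.IsBasis I X) : M.mrank X = I.ncard := by
  apply le_antisymm
  · refine csSup_le ⟨I.ncard, I, hI.indep, hI.subset, rfl⟩ ?_
    rintro m ⟨J, hJ, hJX, rfl⟩
    obtain ⟨J', hJ', hJJ'⟩ := hJ.subset_isBasis_of_subset hJX hI.subset_ground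
    have hcard : J'.ncard = I.ncard := by
      rw [Set.ncard_def, hJ'.encard_eq_encard hI, ← Set.ncard_def]
    exact hcard ▸ Set.ncard_le_ncard hJJ' J'.toFinite
  · apply le_csSup
    · refine ⟨Fintype.card α, ?_⟩
      rintro m ⟨J, _, _, rfl⟩
      exact (Set.ncard_le_ncard (Set.subset_univ J) Set.finite_univ).trans (by simp [Set.ncard_univ, Nat.card_eq_fintype_card])
    · exact ⟨I, hI.indep, hI.subset, rfl⟩

lemma Matroid.mrank_dual_formula {α : Type*} [Fintype α] {M : Matroid α}
    (hE : M.E = Set.univ) (X : Set α) :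
    M✶.mrank X + M.mrank Set.univ = X.ncard + M.mrank (Set.univ \ X) := by
  obtain ⟨I, hI⟩ := M.exists_isBasis (Set.univ \ X) (by rw [hE]; exact Set.subset_univ _)
  obtain ⟨Bb, hBb, hIB⟩ := hI.indep.exists_isBase_superset
  have hBint : Bb ∩ (Set.univ \ X) = I :=
    (hI.eq_of_subset_indep (hBb.indep.inter_right _)
      (Set.subset_inter hIB hI.subset) Set.inter_subset_right).symm
  have hdual := hBb.compl_inter_isBasis_of_inter_isBasis (X := Set.univ \ X)
      (by rw [hBint]; exact hI)
  rw [hE, Set.diff_diff_cancel_left (Set.subset_univ X)] at hdual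
  have h1 : M✶.mrank X = (X \ Bb).ncard := by
    rw [hdual.mrank_eq]; congr 1; ext x; simp [and_comm]
  have h2 : M.mrank Set.univ = Bb.ncard := by
    rw [← hE, hBb.isBasis_ground.mrank_eq]
  have h3 : M.mrank (Set.univ \ X) = (Bb \ X).ncard := by
    rw [hI.mrank_eq, ← hBint]; congr 1; ext x; simp
  rw [h1, h2, h3]
  have e1 := Set.ncard_inter_add_ncard_diff_eq_ncard X Bb X.toFinite
  have e2 := Set.ncard_inter_add_ncard_diff_eq_ncard Bb X Bb.toFinite
  rw [Set.inter_comm] at e2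
  omega

/-- Let `B` be a `k × n` matrix over `F` of rank `k`, with vector matroid `M`, and
let `C` be an `(n-k) × n` matrix of rank `n - k` whose vector matroid is `M✶`. For a
side-information structure `S` (with `v ∉ S v`), `B` is a valid index coding matrix,
i.e. `r([n] \ S(v)) = 1 + r([n] \ (S(v) ∪ {v}))` for all `v` in the matroid of `B`,
iff `r*(S(v) ∪ {v}) = r*(S(v))` for all `v`, where `r*` is the rank function of the
matroid of `C`. -/
theorem index_code_valid_iff_dual_rank_condition
    {F : Type*} [Field F] {k n : ℕ} (hkn : k ≤ n)
    (B : Matrix (Fin k) (Fin n) F) (hB : B.rank = k)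
    (C : Matrix (Fin (n - k)) (Fin n) F) (hC : C.rank = n - k)
    (M : Matroid (Fin n)) (hE : M.E = Set.univ)
    (hIB : ∀ s : Set (Fin n),
      M.Indep s ↔ LinearIndependent F (fun i : s => B.transpose i.1))
    (hIC : ∀ s : Set (Fin n),
      M✶.Indep s ↔ LinearIndependent F (fun i : s => C.transpose i.1))
    (S : Fin n → Set (Fin n)) (hS : ∀ v, v ∉ S v) :
    (∀ v : Fin n,
        M.mrank (Set.univ \ S v) = 1 + M.mrank (Set.univ \ (S v ∪ {v}))) ↔
      (∀ v : Fin n, M✶.mrank (S v ∪ {v}) = M✶.mrank (S v)) := by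
  apply forall_congr'
  intro v
  have f1 := Matroid.mrank_dual_formula hE (S v)
  have f2 := Matroid.mrank_dual_formula hE (S v ∪ {v})
  have hcard : (S v ∪ {v}).ncard = (S v).ncard + 1 := by
    rw [Set.union_singleton, Set.ncard_insert_of_notMem (hS v) (S v).toFinite]
  omega
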